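/- Let (V_{a1})_{1≤a≤ℓ} and (H_{ab})_{1≤a≤ℓ, 1≤b≤ℓ+1−a} be nonnegative integers satisfying the inequalities ∑_{k=0}^{b} H_{a−k,k+1} ≤ V_{a+1,1} + ∑_{k=0}^{b} H_{a−k+1,k+1} for all 1 ≤ a ≤ ℓ, 0 ≤ b ≤ a−1 (terms with out-of-range indices interpreted as 0). Then there exists a GT tableau r (of rank ℓ+1, with nonnegative integer entries) such that V_{a1}(r) = V_{a1} and H_{ab}(r) = H_{ab} for all a, b. -/

import Mathlib

/-- A Gelfand–Tsetlin tableau of rank `ℓ+1`. -/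
def IsGT (ℓ : ℕ) (r : ℕ → ℕ → ℤ) : Prop :=
  (∀ i j, 1 ≤ i → 1 ≤ j → i + j ≤ ℓ + 2 → 0 ≤ r i j) ∧
  (∀ i j, 1 ≤ i → 1 ≤ j → i + 1 + j ≤ ℓ + 2 → r (i + 1) j ≤ r i j) ∧
  (∀ i j, 1 ≤ i → 1 ≤ j → i + j + 1 ≤ ℓ + 2 → r i (j + 1) ≤ r (i + 1) j)

/-- Surjectivity half of the coordinate description of GT tableaux: any nonnegative
integers `V_{a1}`, `H_{ab}` (vanishing out of range) satisfying the inequalities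
`∑_{k=0}^{b} H_{a−k,k+1} ≤ V_{a+1,1} + ∑_{k=0}^{b} H_{a−k+1,k+1}` (for `1 ≤ a ≤ ℓ`,
`0 ≤ b ≤ a−1`, out-of-range terms being `0`) arise from a GT tableau. -/
theorem gt_coordinates_surjective (ℓ : ℕ) (V : ℕ → ℕ) (H : ℕ → ℕ → ℕ)
    (hV0 : V 0 = 0) (hV0' : ∀ a, ℓ < a → V a = 0)
    (hH0 : ∀ a b, (a = 0 ∨ b = 0 ∨ ℓ + 1 < a + b) → H a b = 0)
    (hineq : ∀ a b, 1 ≤ a → a ≤ ℓ → b + 1 ≤ a →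
      (∑ k ∈ Finset.range (b + 1), H (a - k) (k + 1)) ≤
        V (a + 1) + ∑ k ∈ Finset.range (b + 1), H (a - k + 1) (k + 1)) :
    ∃ r : ℕ → ℕ → ℤ, IsGT ℓ r ∧
      (∀ a, 1 ≤ a → a ≤ ℓ → r a 1 - r (a + 1) 1 = (V a : ℤ)) ∧
      (∀ a b, 1 ≤ a → 1 ≤ b → a + b ≤ ℓ + 1 →
        r (a + 1) b - r a (b + 1) = (H a b : ℤ)) := by
  classical
  set C : ℕ := ∑ k ∈ Finset.range (ℓ + 1), ∑ m ∈ Finset.range (ℓ + 2), H m (k + 1) with hC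
  refine ⟨fun i j => (C : ℤ) + ∑ m ∈ Finset.Ico (i + j - 1) (ℓ + 1), (V m : ℤ)
      - ∑ k ∈ Finset.range (j - 1), (H (i + j - 2 - k) (k + 1) : ℤ), ⟨?_, ?_, ?_⟩, ?_, ?_⟩
  · -- nonnegativity
    intro i j hi hj hij
    dsimp only
    have hSH : (∑ k ∈ Finset.range (j - 1), H (i + j - 2 - k) (k + 1)) ≤ C := by
      calc ∑ k ∈ Finset.range (j - 1), H (i + j - 2 - k) (k + 1)
          ≤ ∑ k ∈ Finset.range (j - 1), ∑ m ∈ Finset.range (ℓ + 2), H m (k + 1) := by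
            refine Finset.sum_le_sum fun k hk => ?_
            exact Finset.single_le_sum (f := fun m => H m (k + 1)) (fun _ _ => Nat.zero_le _)
              (Finset.mem_range.2 (by omega))
        _ ≤ C := by
            refine Finset.sum_le_sum_of_subset (Finset.range_subset_range.2 (by omega))
    have h1 : (↑(∑ k ∈ Finset.range (j - 1), H (i + j - 2 - k) (k + 1)) : ℤ) ≤ (C : ℤ) :=
      Int.ofNat_le.2 hSH
    push_cast at h1
    have h2 : (0 : ℤ) ≤ ∑ m ∈ Finset.Ico (i + j - 1) (ℓ + 1), (V m : ℤ) :=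
      Finset.sum_nonneg fun m _ => Int.ofNat_nonneg _
    linarith
  · -- rows weakly decreasing down columns
    intro i j hi hj hij
    dsimp only
    have harith1 : i + 1 + j - 1 = (i + j - 1) + 1 := by omega
    rw [harith1]
    have hsplit : ∑ m ∈ Finset.Ico (i + j - 1) (ℓ + 1), (V m : ℤ)
        = (V (i + j - 1) : ℤ) + ∑ m ∈ Finset.Ico (i + j - 1 + 1) (ℓ + 1), (V m : ℤ) :=
      Finset.sum_eq_sum_Ico_succ_bot (by omega) _
    rw [hsplit]
    have key : (↑(∑ k ∈ Finset.range (j - 1), H (i + j - 2 - k) (k + 1)) : ℤ)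
        ≤ (V (i + j - 1) : ℤ)
          + ↑(∑ k ∈ Finset.range (j - 1), H (i + 1 + j - 2 - k) (k + 1)) := by
      rcases Nat.lt_or_ge j 2 with hj2 | hj2
      · interval_cases j
        simp
      · obtain ⟨j', rfl⟩ : ∃ j', j = j' + 2 := ⟨j - 2, by omega⟩
        have h := hineq (i + j') j' (by omega) (by omega) (by omega)
        have e1 : ∑ k ∈ Finset.range (j' + 2 - 1), H (i + (j' + 2) - 2 - k) (k + 1)
            = ∑ k ∈ Finset.range (j' + 1), H (i + j' - k) (k + 1) := by
          refine Finset.sum_congr (by norm_num) fun k hk => ?_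
          simp only [Finset.mem_range] at hk
          have hidx : ∀ x y : ℕ, x = y → H x (k + 1) = H y (k + 1) := by rintro x y rfl; rfl
          exact hidx _ _ (by omega)
        have e2 : ∑ k ∈ Finset.range (j' + 2 - 1), H (i + 1 + (j' + 2) - 2 - k) (k + 1)
            = ∑ k ∈ Finset.range (j' + 1), H (i + j' - k + 1) (k + 1) := by
          refine Finset.sum_congr (by norm_num) fun k hk => ?_
          simp only [Finset.mem_range] at hk
          have hidx : ∀ x y : ℕ, x = y → H x (k + 1) = H y (k + 1) := by rintro x y rfl; rfl
          exact hidx _ _ (by omega)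
        rw [e1, e2]
        have e3 : i + (j' + 2) - 1 = i + j' + 1 := by omega
        rw [e3]
        exact_mod_cast h
    push_cast at key
    linarith
  · -- diagonal inequality
    intro i j hi hj hij
    dsimp only
    have harith1 : i + (j + 1) - 1 = i + 1 + j - 1 := by omega
    rw [harith1]
    obtain ⟨j', rfl⟩ : ∃ j', j = j' + 1 := ⟨j - 1, by omega⟩
    have e1 : ∑ k ∈ Finset.range (j' + 1 + 1 - 1), (H (i + (j' + 1 + 1) - 2 - k) (k + 1) : ℤ)
        = ∑ k ∈ Finset.range (j' + 1), (H (i + j' - k) (k + 1) : ℤ) := by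
      refine Finset.sum_congr (by norm_num) fun k hk => ?_
      simp only [Finset.mem_range] at hk
      have hidx : ∀ x y : ℕ, x = y → ((H x (k + 1) : ℤ)) = (H y (k + 1) : ℤ) := by
        rintro x y rfl; rfl
      exact hidx _ _ (by omega)
    have e2 : ∑ k ∈ Finset.range (j' + 1 - 1), (H (i + 1 + (j' + 1) - 2 - k) (k + 1) : ℤ)
        = ∑ k ∈ Finset.range j', (H (i + j' - k) (k + 1) : ℤ) := by
      refine Finset.sum_congr (by norm_num) fun k hk => ?_
      simp only [Finset.mem_range] at hk
      have hidx : ∀ x y : ℕ, x = y → ((H x (k + 1) : ℤ)) = (H y (k + 1) : ℤ) := by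
        rintro x y rfl; rfl
      exact hidx _ _ (by omega)
    rw [e1, e2, Finset.sum_range_succ]
    have : (0 : ℤ) ≤ (H (i + j' - j') (j' + 1) : ℤ) := Int.ofNat_nonneg _
    linarith
  · -- V coordinates
    intro a ha haℓ
    dsimp only
    have e0 : a + 1 - 1 = a := by omega
    have e0' : a + 1 + 1 - 1 = a + 1 := by omega
    rw [e0, e0']
    norm_num
    have hsplit : ∑ m ∈ Finset.Ico a (ℓ + 1), (V m : ℤ)
        = (V a : ℤ) + ∑ m ∈ Finset.Ico (a + 1) (ℓ + 1), (V m : ℤ) :=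
      Finset.sum_eq_sum_Ico_succ_bot (by omega) _
    rw [hsplit]
    ring
  · -- H coordinates
    intro a b ha hb hab
    dsimp only
    obtain ⟨b', rfl⟩ : ∃ b', b = b' + 1 := ⟨b - 1, by omega⟩
    have e0 : a + 1 + (b' + 1) - 1 = a + (b' + 1 + 1) - 1 := by omega
    rw [e0]
    have e1 : ∑ k ∈ Finset.range (b' + 1 + 1 - 1), (H (a + (b' + 1 + 1) - 2 - k) (k + 1) : ℤ)
        = ∑ k ∈ Finset.range (b' + 1), (H (a + b' - k) (k + 1) : ℤ) := by
      refine Finset.sum_congr (by norm_num) fun k hk => ?_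
      simp only [Finset.mem_range] at hk
      have hidx : ∀ x y : ℕ, x = y → ((H x (k + 1) : ℤ)) = (H y (k + 1) : ℤ) := by
        rintro x y rfl; rfl
      exact hidx _ _ (by omega)
    have e2 : ∑ k ∈ Finset.range (b' + 1 - 1), (H (a + 1 + (b' + 1) - 2 - k) (k + 1) : ℤ)
        = ∑ k ∈ Finset.range b', (H (a + b' - k) (k + 1) : ℤ) := by
      refine Finset.sum_congr (by norm_num) fun k hk => ?_
      simp only [Finset.mem_range] at hk
      have hidx : ∀ x y : ℕ, x = y → ((H x (k + 1) : ℤ)) = (H y (k + 1) : ℤ) := by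
        rintro x y rfl; rfl
      exact hidx _ _ (by omega)
    rw [e1, e2, Finset.sum_range_succ]
    have e3 : a + b' - b' = a := by omega
    rw [e3]
    ring
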